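/- arXiv:0902.0195 — 5 statements merged into one kernel-verified Lean document; each statement's English description precedes it below -/
import Mathlib

section
/- Let a : FreeMonoid (Fin n) → ℝ≥0 with a(e) = 0, and define b : FreeMonoid (Fin n) → ℝ by b(α) = ∑_{j=1}^{|α|} ∑_{γ₁⋯γⱼ = α, each |γᵢ| ≥ 1} a(γ₁)a(γ₂)⋯a(γⱼ) for |α| ≥ 1 and b(e) = 1. Then for all α, β in the free monoid, b(αβ) ≥ b(α)·b(β). -/
open scoped NNReal

private lemma splitAux_append {α : Type*} :
    ∀ (ns1 : List ℕ) (l1 l2 : List α) (ns2 : List ℕ), ns1.sum = l1.length →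
      List.splitWrtCompositionAux (l1 ++ l2) (ns1 ++ ns2) =
        List.splitWrtCompositionAux l1 ns1 ++ List.splitWrtCompositionAux l2 ns2
  | [], l1, l2, ns2, h => by
      have : l1 = [] := List.eq_nil_of_length_eq_zero (by simpa using h.symm)
      subst this
      simp [List.splitWrtCompositionAux]
  | n :: ns, l1, l2, ns2, h => by
      simp only [List.sum_cons] at h
      have hn : n ≤ l1.length := by omega
      rw [List.cons_append, List.splitWrtCompositionAux_cons,
        List.splitWrtCompositionAux_cons,
        List.take_append_of_le_length hn, List.drop_append_of_le_length hn,
        splitAux_append ns (l1.drop n) l2 ns2 (by simp; omega), List.cons_append]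

private def joinComp {n1 n2 : ℕ} (c1 : Composition n1) (c2 : Composition n2) :
    Composition (n1 + n2) :=
  ⟨c1.blocks ++ c2.blocks,
   fun {i} hi => by rcases List.mem_append.1 hi with h | h
                    exacts [c1.blocks_pos h, c2.blocks_pos h],
   by simp [c1.blocks_sum, c2.blocks_sum]⟩

private lemma pos_append_cancel :
    ∀ (p1 : List ℕ) (q1 : List ℕ) (p2 q2 : List ℕ),
      (∀ x ∈ p1, 0 < x) → (∀ x ∈ q1, 0 < x) → p1.sum = q1.sum →
      p1 ++ p2 = q1 ++ q2 → p1 = q1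
  | [], [], _, _, _, _, _, _ => rfl
  | [], m :: s, _, _, _, hq, hs, _ => by
      exfalso
      have := hq m (by simp)
      simp at hs; omega
  | n :: t, [], _, _, hp, _, hs, _ => by
      exfalso
      have := hp n (by simp)
      simp at hs; omega
  | n :: t, m :: s, p2, q2, hp, hq, hs, he => by
      simp only [List.cons_append, List.cons.injEq] at he
      obtain ⟨rfl, he⟩ := he
      simp only [List.sum_cons] at hs
      have hs' : t.sum = s.sum := by omega
      rw [pos_append_cancel t s p2 q2 (fun x hx => hp x (by simp [hx]))
        (fun x hx => hq x (by simp [hx])) hs' he]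

private lemma joinComp_inj {n1 n2 : ℕ} : Function.Injective
    (fun p : Composition n1 × Composition n2 => joinComp p.1 p.2) := by
  rintro ⟨c1, c2⟩ ⟨d1, d2⟩ h
  have hb : c1.blocks ++ c2.blocks = d1.blocks ++ d2.blocks :=
    congrArg Composition.blocks (by simpa using h : joinComp c1 c2 = joinComp d1 d2)
  have h1 : c1.blocks = d1.blocks :=
    pos_append_cancel _ _ _ _ (fun x hx => c1.blocks_pos hx)
      (fun x hx => d1.blocks_pos hx) (by rw [c1.blocks_sum, d1.blocks_sum]) hb
  have h2 : c2.blocks = d2.blocks := by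
    rw [h1] at hb; exact List.append_cancel_left hb
  simp only [Prod.mk.injEq]
  exact ⟨Composition.ext h1, Composition.ext h2⟩


private lemma key {A : Type*} (l1 l2 : List A) (f : List A → ℝ) (hf : ∀ γ, 0 ≤ f γ) :
    (∑ c1 : Composition l1.length, ((l1.splitWrtComposition c1).map f).prod) *
      (∑ c2 : Composition l2.length, ((l2.splitWrtComposition c2).map f).prod) ≤
    ∑ c : Composition (l1 ++ l2).length,
      (((l1 ++ l2).splitWrtComposition c).map f).prod := by
  classical
  set g : Composition l1.length × Composition l2.length → Composition (l1 ++ l2).length :=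
    fun p => ⟨p.1.blocks ++ p.2.blocks,
      fun {i} hi => by rcases List.mem_append.1 hi with h | h
                       exacts [p.1.blocks_pos h, p.2.blocks_pos h],
      by simp [p.1.blocks_sum, p.2.blocks_sum]⟩ with hg
  have hginj : Function.Injective g := by
    rintro ⟨c1, c2⟩ ⟨d1, d2⟩ h
    have hb : c1.blocks ++ c2.blocks = d1.blocks ++ d2.blocks :=
      congrArg Composition.blocks h
    have h1 : c1.blocks = d1.blocks :=
      pos_append_cancel _ _ _ _ (fun x hx => c1.blocks_pos hx)
        (fun x hx => d1.blocks_pos hx) (by rw [c1.blocks_sum, d1.blocks_sum]) hb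
    have h2 : c2.blocks = d2.blocks := by
      rw [h1] at hb; exact List.append_cancel_left hb
    simp only [Prod.mk.injEq]
    exact ⟨Composition.ext h1, Composition.ext h2⟩
  have hterm : ∀ p : Composition l1.length × Composition l2.length,
      (((l1 ++ l2).splitWrtComposition (g p)).map f).prod =
        ((l1.splitWrtComposition p.1).map f).prod *
          ((l2.splitWrtComposition p.2).map f).prod := by
    rintro ⟨c1, c2⟩
    have : (l1 ++ l2).splitWrtComposition (g (c1, c2)) =
        l1.splitWrtComposition c1 ++ l2.splitWrtComposition c2 :=
      splitAux_append c1.blocks l1 l2 c2.blocks c1.blocks_sum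
    rw [this, List.map_append, List.prod_append]
  calc (∑ c1 : Composition l1.length, ((l1.splitWrtComposition c1).map f).prod) *
        (∑ c2 : Composition l2.length, ((l2.splitWrtComposition c2).map f).prod)
      = ∑ p : Composition l1.length × Composition l2.length,
          (((l1 ++ l2).splitWrtComposition (g p)).map f).prod := by
        rw [Finset.sum_mul_sum, ← Fintype.sum_prod_type']
        exact Finset.sum_congr rfl fun p _ => (hterm p).symm
    _ = ∑ c ∈ Finset.univ.image g, (((l1 ++ l2).splitWrtComposition c).map f).prod := by
        rw [Finset.sum_image (fun x _ y _ h => hginj h)]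
    _ ≤ ∑ c : Composition (l1 ++ l2).length,
          (((l1 ++ l2).splitWrtComposition c).map f).prod := by
        apply Finset.sum_le_sum_of_subset_of_nonneg (Finset.subset_univ _)
        intro c _ _
        exact List.prod_nonneg (by simpa using fun x _ => hf x)

/-- If `b α` is given by the sum over all factorizations of `α` into
nonempty consecutive blocks (equivalently, over compositions of `|α|`) of the products
of the `a`-values of the blocks (with `b e = 1`), then `b` is supermultiplicative:
`b (α * β) ≥ b α * b β`. -/
theorem stmt0 {n : ℕ} (a : FreeMonoid (Fin n) → ℝ≥0) (ha : a 1 = 0)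
    (b : FreeMonoid (Fin n) → ℝ)
    (hbe : b 1 = 1)
    (hb : ∀ α : FreeMonoid (Fin n), α ≠ 1 →
      b α = ∑ c : Composition (FreeMonoid.toList α).length,
        (((FreeMonoid.toList α).splitWrtComposition c).map
          (fun γ => (a (FreeMonoid.ofList γ) : ℝ))).prod) :
    ∀ α β : FreeMonoid (Fin n), b α * b β ≤ b (α * β) := by
  intro α β
  by_cases hα : α = 1
  · subst hα; simp [hbe]
  by_cases hβ : β = 1
  · subst hβ; simp [hbe]
  have hαβ : α * β ≠ 1 := by
    intro h
    have : FreeMonoid.toList α ++ FreeMonoid.toList β = [] := by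
      simpa using congrArg FreeMonoid.toList h
    exact hα (by
      have := (List.append_eq_nil_iff.1 this).1
      exact FreeMonoid.toList.injective (by simpa using this))
  rw [hb α hα, hb β hβ, hb (α * β) hαβ]
  exact key (FreeMonoid.toList α) (FreeMonoid.toList β)
    (fun γ => (a (FreeMonoid.ofList γ) : ℝ)) (fun γ => (a (FreeMonoid.ofList γ)).coe_nonneg)
end

section
/- Let b : FreeMonoid (Fin n) → ℝ satisfy b(α) > 0 for all α and b(αβ) ≥ b(α)b(β). For each generator gᵢ define the weighted shift Wᵢ on ℓ²(FreeMonoid (Fin n)) by Wᵢ(δ_α) = √(b(α)/b(gᵢα)) δ_{gᵢα}. Then each Wᵢ extends to a bounded operator with operator norm ‖Wᵢ‖ = 1/√(b(gᵢ)). -/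
open scoped ENNReal

noncomputable instance {n : ℕ} : DecidableEq (FreeMonoid (Fin n)) := Classical.decEq _

set_option maxHeartbeats 1000000 in
/-- if `b` is positive and supermultiplicative (with `b e = 1`), then for each
generator `gᵢ` the weighted shift `δ_α ↦ √(b α / b (gᵢ α)) δ_{gᵢ α}` extends to a bounded
operator `W` on `ℓ²(FreeMonoid (Fin n))` with `‖W‖ = 1 / √(b gᵢ)`. -/
theorem stmt2 {n : ℕ} (b : FreeMonoid (Fin n) → ℝ)
    (hbpos : ∀ α, 0 < b α) (hbe : b 1 = 1)
    (hbmul : ∀ α β, b α * b β ≤ b (α * β)) (i : Fin n) :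
    ∃ W : lp (fun _ : FreeMonoid (Fin n) => ℂ) 2 →L[ℂ]
        lp (fun _ : FreeMonoid (Fin n) => ℂ) 2,
      (∀ α : FreeMonoid (Fin n),
        W (lp.single 2 α (1 : ℂ)) =
          (Real.sqrt (b α / b (FreeMonoid.of i * α)) : ℂ) •
            lp.single 2 (FreeMonoid.of i * α) (1 : ℂ)) ∧
      ‖W‖ = 1 / Real.sqrt (b (FreeMonoid.of i)) := by
  classical
  set g : FreeMonoid (Fin n) → FreeMonoid (Fin n) := fun α => FreeMonoid.of i * α with hg
  have hginj : Function.Injective g := fun a b h => by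
    simp only [hg] at h; exact mul_left_cancel h
  set c : FreeMonoid (Fin n) → ℝ := fun α => Real.sqrt (b α / b (g α)) with hc
  set C : ℝ := 1 / Real.sqrt (b (FreeMonoid.of i)) with hC
  have hCpos : 0 < C := div_pos one_pos (Real.sqrt_pos.2 (hbpos _))
  have hcC : ∀ α, c α ≤ C := by
    intro α
    have h1 : b α / b (g α) ≤ 1 / b (FreeMonoid.of i) := by
      rw [div_le_div_iff₀ (hbpos _) (hbpos _), one_mul]
      calc b α * b (FreeMonoid.of i) = b (FreeMonoid.of i) * b α := mul_comm _ _
        _ ≤ b (g α) := hbmul _ _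
    calc c α ≤ Real.sqrt (1 / b (FreeMonoid.of i)) := Real.sqrt_le_sqrt h1
      _ = C := by rw [one_div, Real.sqrt_inv, ← one_div]
  have hcpos : ∀ α, 0 < c α := fun α => Real.sqrt_pos.2 (div_pos (hbpos _) (hbpos _))
  have hp2 : (0:ℝ) < (2 : ℝ≥0∞).toReal := by norm_num
  -- the underlying function
  set F : lp (fun _ : FreeMonoid (Fin n) => ℂ) 2 → (FreeMonoid (Fin n) → ℂ) :=
    fun f => Function.extend g (fun α => (c α : ℂ) * f α) 0 with hF
  have hnormF : ∀ f β, ‖F f β‖ ^ (2 : ℝ≥0∞).toReal =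
      Function.extend g (fun α => ‖(c α : ℂ) * f α‖ ^ (2 : ℝ≥0∞).toReal) 0 β := by
    intro f β
    by_cases hβ : ∃ α, g α = β
    · obtain ⟨α, rfl⟩ := hβ
      rw [hF]
      simp only [hginj.extend_apply]
    · simp only [hF]
      rw [Function.extend_apply' _ _ _ hβ, Function.extend_apply' _ _ _ hβ]
      simp only [Pi.zero_apply, norm_zero]
      exact Real.zero_rpow hp2.ne'
  have hble : ∀ (f : lp (fun _ : FreeMonoid (Fin n) => ℂ) 2) α,
      ‖(c α : ℂ) * f α‖ ^ (2 : ℝ≥0∞).toReal ≤ C ^ (2 : ℝ≥0∞).toReal * ‖f α‖ ^ (2 : ℝ≥0∞).toReal := by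
    intro f α
    rw [← Real.mul_rpow hCpos.le (norm_nonneg _)]
    refine Real.rpow_le_rpow (norm_nonneg _) ?_ hp2.le
    rw [norm_mul, Complex.norm_real, Real.norm_eq_abs, abs_of_nonneg (hcpos α).le]
    exact mul_le_mul_of_nonneg_right (hcC α) (norm_nonneg _)
  have hfsum : ∀ f : lp (fun _ : FreeMonoid (Fin n) => ℂ) 2,
      Summable fun α => ‖f α‖ ^ (2 : ℝ≥0∞).toReal := fun f => (lp.memℓp f).summable hp2
  have hFsum : ∀ f : lp (fun _ : FreeMonoid (Fin n) => ℂ) 2,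
      Summable fun α => ‖(c α : ℂ) * f α‖ ^ (2 : ℝ≥0∞).toReal := by
    intro f
    refine Summable.of_nonneg_of_le (fun α => Real.rpow_nonneg (norm_nonneg _) _)
      (hble f) ?_
    exact (hfsum f).mul_left _
  have hmem : ∀ f, Memℓp (F f) 2 := by
    intro f
    refine memℓp_gen ?_
    have : (fun β => ‖F f β‖ ^ (2 : ℝ≥0∞).toReal) =
        Function.extend g (fun α => ‖(c α : ℂ) * f α‖ ^ (2 : ℝ≥0∞).toReal) 0 :=
      funext (hnormF f)
    rw [this, summable_extend_zero hginj]
    exact hFsum f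
  -- the linear map
  set T : lp (fun _ : FreeMonoid (Fin n) => ℂ) 2 →ₗ[ℂ] lp (fun _ : FreeMonoid (Fin n) => ℂ) 2 :=
    { toFun := fun f => ⟨F f, hmem f⟩
      map_add' := by
        intro f f'
        apply Subtype.ext
        funext β
        have h1 : (↑(f + f') : FreeMonoid (Fin n) → ℂ) β = f β + f' β := by
          rw [lp.coeFn_add]; rfl
        show F (f + f') β = F f β + F f' β
        by_cases hβ : ∃ α, g α = β
        · obtain ⟨α, rfl⟩ := hβ
          simp only [hF, hginj.extend_apply, lp.coeFn_add, Pi.add_apply]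
          ring
        · simp only [hF, Function.extend_apply' _ _ _ hβ, Pi.zero_apply, add_zero]
      map_smul' := by
        intro m f
        apply Subtype.ext
        funext β
        show F (m • f) β = m * F f β
        by_cases hβ : ∃ α, g α = β
        · obtain ⟨α, rfl⟩ := hβ
          simp only [hF, hginj.extend_apply, lp.coeFn_smul, Pi.smul_apply, smul_eq_mul]
          ring
        · simp only [hF, Function.extend_apply' _ _ _ hβ, Pi.zero_apply, mul_zero] } with hT
  have hTapp : ∀ f, (↑(T f) : FreeMonoid (Fin n) → ℂ) = F f := fun f => rfl
  -- the bound
  have hbound : ∀ f, ‖T f‖ ≤ C * ‖f‖ := by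
    intro f
    rw [← Real.rpow_le_rpow_iff (norm_nonneg _) (by positivity) hp2]
    rw [lp.norm_rpow_eq_tsum hp2]
    have h1 : (fun β => ‖(T f : FreeMonoid (Fin n) → ℂ) β‖ ^ (2 : ℝ≥0∞).toReal) =
        Function.extend g (fun α => ‖(c α : ℂ) * f α‖ ^ (2 : ℝ≥0∞).toReal) 0 := by
      rw [hTapp]; exact funext (hnormF f)
    calc ∑' β, ‖(T f : FreeMonoid (Fin n) → ℂ) β‖ ^ (2 : ℝ≥0∞).toReal
        = ∑' α, ‖(c α : ℂ) * f α‖ ^ (2 : ℝ≥0∞).toReal := by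
          rw [h1]; exact tsum_extend_zero hginj _
      _ ≤ ∑' α, C ^ (2 : ℝ≥0∞).toReal * ‖f α‖ ^ (2 : ℝ≥0∞).toReal :=
          Summable.tsum_le_tsum (hble f) (hFsum f) ((hfsum f).mul_left _)
      _ = C ^ (2 : ℝ≥0∞).toReal * ∑' α, ‖f α‖ ^ (2 : ℝ≥0∞).toReal := tsum_mul_left
      _ = C ^ (2 : ℝ≥0∞).toReal * ‖f‖ ^ (2 : ℝ≥0∞).toReal := by
          rw [lp.norm_rpow_eq_tsum hp2]
      _ = (C * ‖f‖) ^ (2 : ℝ≥0∞).toReal := (Real.mul_rpow hCpos.le (norm_nonneg _)).symm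
  set W : lp (fun _ : FreeMonoid (Fin n) => ℂ) 2 →L[ℂ] lp (fun _ : FreeMonoid (Fin n) => ℂ) 2 :=
    T.mkContinuous C hbound with hW
  -- action on basis vectors
  have hWsingle : ∀ α : FreeMonoid (Fin n),
      W (lp.single 2 α (1 : ℂ)) = (c α : ℂ) • lp.single 2 (g α) (1 : ℂ) := by
    intro α
    apply Subtype.ext
    funext β
    show F (lp.single 2 α (1 : ℂ)) β = (↑((c α : ℂ) • lp.single 2 (g α) (1 : ℂ)) : _ → ℂ) β
    rw [lp.coeFn_smul, Pi.smul_apply, smul_eq_mul]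
    by_cases hβ : ∃ α', g α' = β
    · obtain ⟨α', rfl⟩ := hβ
      simp only [hF, hginj.extend_apply, lp.single_apply]
      by_cases hαα : α' = α
      · subst hαα; simp
      · rw [Pi.single_eq_of_ne hαα, Pi.single_eq_of_ne (fun h => hαα (hginj h)), mul_zero, mul_zero]
    · simp only [hF]
      rw [Function.extend_apply' _ _ _ hβ, lp.single_apply,
        Pi.single_eq_of_ne (fun h : β = g α => hβ ⟨α, h.symm⟩)]
      simp
  have hsingle_norm : ∀ γ : FreeMonoid (Fin n), ‖(lp.single 2 γ (1 : ℂ) : lp (fun _ : FreeMonoid (Fin n) => ℂ) 2)‖ = 1 := by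
    intro γ
    have := lp.norm_single (α := FreeMonoid (Fin n)) (E := fun _ => ℂ) (p := 2) (by norm_num) γ (1 : ℂ)
    simpa using this
  refine ⟨W, fun α => hWsingle α, ?_⟩
  refine le_antisymm (T.mkContinuous_norm_le hCpos.le hbound) ?_
  have h1 : ‖W (lp.single 2 (1 : FreeMonoid (Fin n)) (1 : ℂ))‖ = C := by
    rw [hWsingle 1, norm_smul]
    rw [hsingle_norm, mul_one, Complex.norm_real, Real.norm_eq_abs,
      abs_of_nonneg (hcpos 1).le, hc]
    show Real.sqrt (b 1 / b (g 1)) = C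
    rw [hbe, hg]
    simp only [mul_one]
    rw [one_div, Real.sqrt_inv, ← one_div]
  have h2 := W.le_opNorm (lp.single 2 (1 : FreeMonoid (Fin n)) (1 : ℂ))
  rw [h1, hsingle_norm, mul_one] at h2
  exact h2
end

section
/- With the weighted shifts Wᵢ as above, for any word α = g_{i₁}⋯g_{i_k} define W_α = W_{i₁}⋯W_{i_k}. Then ‖W_α‖ = 1/√(b(α)). -/
set_option maxHeartbeats 1000000


open lp in
/-- Evaluation at a point as a continuous linear map on `ℓ²`. -/
noncomputable def evalCLM {n : ℕ} (γ : FreeMonoid (Fin n)) :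
    lp (fun _ : FreeMonoid (Fin n) => ℂ) 2 →L[ℂ] ℂ :=
  LinearMap.mkContinuous
    { toFun := fun f => f γ
      map_add' := fun f g => by simp
      map_smul' := fun c f => by simp }
    1 (fun f => by
      show ‖f γ‖ ≤ 1 * ‖f‖
      simpa using lp.norm_apply_le_norm (by norm_num : (2 : ENNReal) ≠ 0) f γ)

theorem evalCLM_apply {n : ℕ} (γ : FreeMonoid (Fin n))
    (f : lp (fun _ : FreeMonoid (Fin n) => ℂ) 2) : evalCLM γ f = f γ := rfl

/-- with the weighted shifts `Wᵢ(δ_β) = √(b β / b (gᵢ β)) δ_{gᵢ β}` (where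
`b e = 1`, `b > 0`, `b(αβ) ≥ b(α)b(β)`), the product `W_α` of the shifts along a word `α`
has operator norm `1 / √(b α)`. -/
theorem stmt3 {n : ℕ} (b : FreeMonoid (Fin n) → ℝ)
    (hbpos : ∀ α, 0 < b α) (hbe : b 1 = 1)
    (hbmul : ∀ α β, b α * b β ≤ b (α * β))
    (W : Fin n → (lp (fun _ : FreeMonoid (Fin n) => ℂ) 2 →L[ℂ]
        lp (fun _ : FreeMonoid (Fin n) => ℂ) 2))
    (hW : ∀ (i : Fin n) (β : FreeMonoid (Fin n)),
      W i (lp.single 2 β (1 : ℂ)) =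
        (Real.sqrt (b β / b (FreeMonoid.of i * β)) : ℂ) •
          lp.single 2 (FreeMonoid.of i * β) (1 : ℂ)) :
    ∀ α : FreeMonoid (Fin n),
      ‖FreeMonoid.lift W α‖ = 1 / Real.sqrt (b α) := by
  -- action of `lift W α` on the basis vectors
  have key : ∀ (α β : FreeMonoid (Fin n)),
      FreeMonoid.lift W α (lp.single 2 β (1 : ℂ)) =
        (Real.sqrt (b β / b (α * β)) : ℂ) • lp.single 2 (α * β) (1 : ℂ) := by
    intro α
    induction α using FreeMonoid.inductionOn' with
    | one =>
        intro β
        simp [div_self (hbpos β).ne']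
    | of_mul i α ih =>
        intro β
        rw [map_mul, FreeMonoid.lift_eval_of, ContinuousLinearMap.mul_apply, ih,
          map_smul, hW, smul_smul, mul_assoc (FreeMonoid.of i) α β]
        congr 1
        rw [← Complex.ofReal_mul, ← Real.sqrt_mul (div_nonneg (hbpos _).le (hbpos _).le)]
        congr 1
        rw [div_mul_div_comm]
        rw [mul_comm (b β), mul_div_mul_left _ _ (hbpos (α * β)).ne']
  intro α
  set T := FreeMonoid.lift W α with hT
  set c : ℝ := 1 / Real.sqrt (b α) with hc
  have hbα := hbpos α
  have hc0 : 0 < c := by positivity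
  -- basic facts
  have hw_nonneg : ∀ β, (0:ℝ) ≤ Real.sqrt (b β / b (α * β)) := fun β => Real.sqrt_nonneg _
  have hw_sq_le : ∀ β : FreeMonoid (Fin n), b β / b (α * β) ≤ 1 / b α := by
    intro β
    rw [div_le_div_iff₀ (hbpos _) hbα, one_mul, mul_comm]
    exact hbmul α β
  have two_toReal : (2 : ENNReal).toReal = 2 := by norm_num
  -- upper bound
  have upper : ‖T‖ ≤ c := by
    refine ContinuousLinearMap.opNorm_le_bound _ hc0.le (fun f => ?_)
    -- HasSum expansion of T f
    have h1 : HasSum (fun β : FreeMonoid (Fin n) => lp.single 2 β (f β)) f :=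
      lp.hasSum_single (by norm_num) f
    have h2 : HasSum
        (fun β : FreeMonoid (Fin n) =>
          (f β * (Real.sqrt (b β / b (α * β)) : ℂ)) • lp.single 2 (α * β) (1 : ℂ)) (T f) := by
      have := (T : _ →L[ℂ] _).hasSum h1
      refine this.congr_fun (fun β => ?_)
      have : lp.single 2 β (f β) =
          f β • (lp.single 2 β (1 : ℂ) : lp (fun _ : FreeMonoid (Fin n) => ℂ) 2) := by
        rw [← lp.single_smul]
        norm_num
      rw [this, map_smul, key, smul_smul]
    -- pointwise values of T f
    have hval : ∀ β : FreeMonoid (Fin n),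
        (T f : ∀ _ : FreeMonoid (Fin n), ℂ) (α * β)
          = f β * (Real.sqrt (b β / b (α * β)) : ℂ) := by
      intro β₀
      have h3 := (evalCLM (n := n) (α * β₀)).hasSum h2
      have h4 : HasSum (fun β : FreeMonoid (Fin n) =>
          if β = β₀ then f β₀ * (Real.sqrt (b β₀ / b (α * β₀)) : ℂ) else 0)
          ((evalCLM (n := n) (α * β₀)) (T f)) := by
        refine h3.congr_fun (fun β => ?_)
        by_cases hβ : β = β₀
        · subst hβ
          simp [evalCLM_apply, lp.single_apply_self]
        · have hne : α * β₀ ≠ α * β := fun h => hβ ((mul_left_cancel h).symm)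
          simp [evalCLM_apply, lp.single_apply_ne _ _ _ hne, if_neg hβ, Pi.single_apply, hne]
      have h5 : HasSum (fun β : FreeMonoid (Fin n) =>
          if β = β₀ then f β₀ * (Real.sqrt (b β₀ / b (α * β₀)) : ℂ) else 0)
          (f β₀ * (Real.sqrt (b β₀ / b (α * β₀)) : ℂ)) := hasSum_ite_eq β₀ _
      exact h4.unique h5
    have hzero : ∀ γ : FreeMonoid (Fin n), (∀ β, γ ≠ α * β) →
        (T f : ∀ _ : FreeMonoid (Fin n), ℂ) γ = 0 := by
      intro γ hγ
      have h3 := (evalCLM (n := n) γ).hasSum h2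
      have h4 : HasSum (fun _ : FreeMonoid (Fin n) => (0:ℂ)) ((evalCLM (n := n) γ) (T f)) := by
        refine h3.congr_fun (fun β => ?_)
        simp [evalCLM_apply, lp.single_apply_ne _ _ _ (hγ β), Pi.single_apply, hγ β]
      exact h4.unique hasSum_zero
    -- comparing squared norms
    have hTf_norm : HasSum (fun γ => ‖(T f : ∀ _ : FreeMonoid (Fin n), ℂ) γ‖ ^ (2:ℝ))
        (‖T f‖ ^ (2:ℝ)) := by
      simpa [two_toReal] using lp.hasSum_norm (p := 2) (by norm_num) (T f)
    have hf_norm : HasSum (fun γ => ‖f γ‖ ^ (2:ℝ)) (‖f‖ ^ (2:ℝ)) := by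
      simpa [two_toReal] using lp.hasSum_norm (p := 2) (by norm_num) f
    have hinj : Function.Injective (fun β : FreeMonoid (Fin n) => α * β) :=
      fun x y h => mul_left_cancel h
    have hsum_eq : ‖T f‖ ^ (2:ℝ) =
        ∑' β : FreeMonoid (Fin n),
          ‖(T f : ∀ _ : FreeMonoid (Fin n), ℂ) (α * β)‖ ^ (2:ℝ) := by
      rw [← hTf_norm.tsum_eq]
      refine (Function.Injective.tsum_eq hinj ?_).symm
      intro γ hγ
      by_contra hrange
      apply Function.mem_support.mp hγ
      have hne : ∀ β, γ ≠ α * β := fun β hβ => hrange ⟨β, hβ.symm⟩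
      rw [hzero γ hne]
      simp [Real.zero_rpow (by norm_num : (2:ℝ) ≠ 0)]
    have hterm : ∀ β : FreeMonoid (Fin n),
        ‖(T f : ∀ _ : FreeMonoid (Fin n), ℂ) (α * β)‖ ^ (2:ℝ)
          ≤ (1 / b α) * ‖f β‖ ^ (2:ℝ) := by
      intro β
      rw [hval β]
      rw [norm_mul, Complex.norm_real, Real.norm_eq_abs,
        abs_of_nonneg (hw_nonneg β)]
      rw [Real.mul_rpow (norm_nonneg _) (hw_nonneg β), Real.rpow_two, Real.rpow_two,
        Real.sq_sqrt (div_nonneg (hbpos _).le (hbpos _).le)]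
      calc ‖f β‖ ^ 2 * (b β / b (α * β)) ≤ ‖f β‖ ^ 2 * (1 / b α) := by
            exact mul_le_mul_of_nonneg_left (hw_sq_le β) (by positivity)
        _ = 1 / b α * ‖f β‖ ^ 2 := by ring
    have hS1 : Summable (fun β : FreeMonoid (Fin n) =>
        ‖(T f : ∀ _ : FreeMonoid (Fin n), ℂ) (α * β)‖ ^ (2:ℝ)) :=
      hTf_norm.summable.comp_injective hinj
    have hS2 : Summable (fun β : FreeMonoid (Fin n) => (1 / b α) * ‖f β‖ ^ (2:ℝ)) :=
      hf_norm.summable.mul_left _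
    have hle : ‖T f‖ ^ (2:ℝ) ≤ (1 / b α) * ‖f‖ ^ (2:ℝ) := by
      rw [hsum_eq]
      calc ∑' β, ‖(T f : ∀ _ : FreeMonoid (Fin n), ℂ) (α * β)‖ ^ (2:ℝ)
          ≤ ∑' β, (1 / b α) * ‖f β‖ ^ (2:ℝ) := Summable.tsum_le_tsum hterm hS1 hS2
        _ = (1 / b α) * ∑' β, ‖f β‖ ^ (2:ℝ) := tsum_mul_left
        _ = (1 / b α) * ‖f‖ ^ (2:ℝ) := by rw [hf_norm.tsum_eq]
    -- conclude
    have hcsq : c ^ (2:ℝ) = 1 / b α := by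
      rw [Real.rpow_two, hc, div_pow, one_pow, Real.sq_sqrt hbα.le]
    have : ‖T f‖ ^ (2:ℝ) ≤ (c * ‖f‖) ^ (2:ℝ) := by
      rw [Real.mul_rpow hc0.le (norm_nonneg _), hcsq]
      exact hle
    have h2pos : (0:ℝ) < 2 := by norm_num
    calc ‖T f‖ = (‖T f‖ ^ (2:ℝ)) ^ (2:ℝ)⁻¹ := by
          rw [← Real.rpow_mul (norm_nonneg _)]
          norm_num
      _ ≤ ((c * ‖f‖) ^ (2:ℝ)) ^ (2:ℝ)⁻¹ :=
          Real.rpow_le_rpow (Real.rpow_nonneg (norm_nonneg _) _) this (by norm_num)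
      _ = c * ‖f‖ := by
          rw [← Real.rpow_mul (mul_nonneg hc0.le (norm_nonneg f))]
          norm_num
  -- lower bound
  have hδ1 : ‖(lp.single 2 (1 : FreeMonoid (Fin n)) (1:ℂ) : lp (fun _ : FreeMonoid (Fin n) => ℂ) 2)‖ = 1 := by
    have := lp.norm_single (p := 2) (E := fun _ : FreeMonoid (Fin n) => ℂ)
      (by norm_num) 1 (1:ℂ)
    simpa using this
  have hδα : ‖(lp.single 2 α (1:ℂ) : lp (fun _ : FreeMonoid (Fin n) => ℂ) 2)‖ = 1 := by
    have := lp.norm_single (p := 2) (E := fun _ : FreeMonoid (Fin n) => ℂ)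
      (by norm_num) α (1:ℂ)
    simpa using this
  have hTδ1 : ‖T (lp.single 2 (1 : FreeMonoid (Fin n)) (1:ℂ))‖ = c := by
    rw [key α 1, mul_one]
    rw [norm_smul, hδα, mul_one, Complex.norm_real, Real.norm_eq_abs,
      abs_of_nonneg (Real.sqrt_nonneg _), hbe, hc]
    rw [one_div, one_div, Real.sqrt_inv]
  have lower : c ≤ ‖T‖ := by
    have := T.le_opNorm (lp.single 2 (1 : FreeMonoid (Fin n)) (1:ℂ))
    rw [hTδ1, hδ1, mul_one] at this
    exact this
  exact le_antisymm upper lower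
end

section
/- With the weighted shifts Wᵢ as above, for any k ∈ ℕ and any finitely supported family of scalars (x_α) indexed by words of length k, the operator norm satisfies ‖∑_{|α|=k} x_α W_α‖ = √(∑_{|α|=k} |x_α|²/b(α)). -/
open scoped ComplexConjugate

section Aux

variable {n : ℕ}

local notation "H" => lp (fun _ : FreeMonoid (Fin n) => ℂ) 2

lemma aux_orthonormal :
    Orthonormal ℂ (fun β : FreeMonoid (Fin n) => lp.single 2 β (1 : ℂ)) := by
  rw [orthonormal_iff_ite]
  intro i j
  rw [lp.inner_single_left]
  by_cases h : i = j
  · subst h; simp [lp.single_apply_self, RCLike.inner_apply]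
  · simp only [RCLike.inner_apply, map_one, one_mul, if_neg h]
    rw [mul_one]
    exact lp.single_apply_ne (E := fun _ : FreeMonoid (Fin n) => ℂ) 2 j 1 h

lemma aux_norm_sq {ι E : Type*} [NormedAddCommGroup E] [InnerProductSpace ℂ E]
    {v : ι → E} (hv : Orthonormal ℂ v) (l : ι → ℂ) (s : Finset ι) :
    ‖∑ i ∈ s, l i • v i‖ ^ 2 = ∑ i ∈ s, ‖l i‖ ^ 2 := by
  have h := hv.inner_sum l l s
  rw [← inner_self_eq_norm_sq (𝕜 := ℂ), h, map_sum]
  refine Finset.sum_congr rfl fun i _ => ?_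
  rw [RCLike.conj_mul, ← RCLike.ofReal_pow, RCLike.ofReal_re]

lemma aux_cancel {α α' β β' : FreeMonoid (Fin n)}
    (h : FreeMonoid.length α = FreeMonoid.length α') (he : α * β = α' * β') :
    α = α' ∧ β = β' := by
  have h1 : FreeMonoid.toList α ++ FreeMonoid.toList β
      = FreeMonoid.toList α' ++ FreeMonoid.toList β' := by
    rw [← FreeMonoid.toList_mul, ← FreeMonoid.toList_mul, he]
  obtain ⟨ha, hb⟩ := List.append_inj h1 h
  exact ⟨FreeMonoid.toList.injective ha, FreeMonoid.toList.injective hb⟩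

lemma aux_lift (b : FreeMonoid (Fin n) → ℝ)
    (hbpos : ∀ α, 0 < b α)
    (W : Fin n → (H →L[ℂ] H))
    (hW : ∀ (i : Fin n) (β : FreeMonoid (Fin n)),
      W i (lp.single 2 β (1 : ℂ)) =
        (Real.sqrt (b β / b (FreeMonoid.of i * β)) : ℂ) •
          lp.single 2 (FreeMonoid.of i * β) (1 : ℂ))
    (α β : FreeMonoid (Fin n)) :
    FreeMonoid.lift W α (lp.single 2 β (1 : ℂ)) =
      (Real.sqrt (b β / b (α * β)) : ℂ) • lp.single 2 (α * β) (1 : ℂ) := by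
  induction α using FreeMonoid.recOn with
  | one =>
      rw [map_one, ContinuousLinearMap.one_apply, one_mul, div_self (hbpos β).ne',
        Real.sqrt_one]
      simp
  | of_mul i α ih =>
      have key : Real.sqrt (b β / b (α * β)) *
          Real.sqrt (b (α * β) / b (FreeMonoid.of i * (α * β))) =
          Real.sqrt (b β / b (FreeMonoid.of i * (α * β))) := by
        rw [← Real.sqrt_mul (div_nonneg (hbpos β).le (hbpos _).le)]
        congr 1
        have h1 := (hbpos (α * β)).ne'
        have h2 := (hbpos (FreeMonoid.of i * (α * β))).ne'
        field_simp
      rw [map_mul, ContinuousLinearMap.mul_apply, ih, map_smul, FreeMonoid.lift_eval_of,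
        hW, smul_smul, mul_assoc]
      congr 1
      rw [← Complex.ofReal_mul, key]

end Aux

set_option maxHeartbeats 1000000 in
/-- with the weighted shifts `Wᵢ(δ_β) = √(b β / b (gᵢ β)) δ_{gᵢ β}`, for any
`k` and any finitely supported family of scalars `(x_α)` supported on words of length `k`,
`‖∑_{|α| = k} x_α W_α‖ = √(∑_{|α| = k} |x_α|² / b α)`. -/
theorem stmt4 {n : ℕ} (b : FreeMonoid (Fin n) → ℝ)
    (hbpos : ∀ α, 0 < b α) (hbe : b 1 = 1)
    (hbmul : ∀ α β, b α * b β ≤ b (α * β))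
    (W : Fin n → (lp (fun _ : FreeMonoid (Fin n) => ℂ) 2 →L[ℂ]
        lp (fun _ : FreeMonoid (Fin n) => ℂ) 2))
    (hW : ∀ (i : Fin n) (β : FreeMonoid (Fin n)),
      W i (lp.single 2 β (1 : ℂ)) =
        (Real.sqrt (b β / b (FreeMonoid.of i * β)) : ℂ) •
          lp.single 2 (FreeMonoid.of i * β) (1 : ℂ))
    (k : ℕ) (x : FreeMonoid (Fin n) →₀ ℂ)
    (hx : ∀ α ∈ x.support, FreeMonoid.length α = k) :
    ‖∑ α ∈ x.support, x α • (FreeMonoid.lift W α)‖ =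
      Real.sqrt (∑ α ∈ x.support, ‖x α‖ ^ 2 / b α) := by
  classical
  set e : FreeMonoid (Fin n) → lp (fun _ : FreeMonoid (Fin n) => ℂ) 2 :=
    fun β => lp.single 2 β 1 with he
  have hon : Orthonormal ℂ e := aux_orthonormal
  set T : lp (fun _ : FreeMonoid (Fin n) => ℂ) 2 →L[ℂ] lp (fun _ : FreeMonoid (Fin n) => ℂ) 2 :=
    ∑ α ∈ x.support, x α • (FreeMonoid.lift W α) with hT
  set C := Real.sqrt (∑ α ∈ x.support, ‖x α‖ ^ 2 / b α) with hC
  have hC0 : 0 ≤ C := Real.sqrt_nonneg _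
  have hCsum : 0 ≤ ∑ α ∈ x.support, ‖x α‖ ^ 2 / b α := by
    apply Finset.sum_nonneg; intro α _
    exact div_nonneg (by positivity) (hbpos α).le
  have hCsq : C ^ 2 = ∑ α ∈ x.support, ‖x α‖ ^ 2 / b α := Real.sq_sqrt hCsum
  have hlift := aux_lift b hbpos W hW
  have hnormsqrt : ∀ r : ℝ, 0 ≤ r → ‖((Real.sqrt r : ℝ) : ℂ)‖ ^ 2 = r := by
    intro r hr
    rw [Complex.norm_real, Real.norm_eq_abs, abs_of_nonneg (Real.sqrt_nonneg r),
      Real.sq_sqrt hr]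
  have hTeβ : ∀ β : FreeMonoid (Fin n), T (e β) =
      ∑ a ∈ x.support.attach, (x a.1 * (Real.sqrt (b β / b (a.1 * β)) : ℂ)) • e (a.1 * β) := by
    intro β
    rw [hT, ContinuousLinearMap.sum_apply,
      ← Finset.sum_attach x.support (fun α => (x α • (FreeMonoid.lift W α)) (e β))]
    refine Finset.sum_congr rfl fun a _ => ?_
    rw [ContinuousLinearMap.smul_apply, he]
    dsimp only
    rw [hlift, smul_smul]
  -- lower bound
  have hlow : C ≤ ‖T‖ := by
    have hTe : T (e 1) = ∑ a ∈ x.support.attach,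
        (x a.1 * (Real.sqrt (1 / b a.1) : ℂ)) • e a.1 := by
      rw [hTeβ 1]
      refine Finset.sum_congr rfl fun a _ => ?_
      rw [mul_one, hbe]
    have honv1 : Orthonormal ℂ (fun a : {α // α ∈ x.support} => e a.1) :=
      hon.comp _ Subtype.val_injective
    have hnorm : ‖T (e 1)‖ ^ 2 = C ^ 2 := by
      rw [hTe, aux_norm_sq honv1, hCsq,
        ← Finset.sum_attach x.support (fun α => ‖x α‖ ^ 2 / b α)]
      refine Finset.sum_congr rfl fun a _ => ?_
      rw [norm_mul, mul_pow, hnormsqrt _ (div_nonneg zero_le_one (hbpos a.1).le)]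
      ring
    have hEnorm : ‖e 1‖ = 1 := by
      have := lp.norm_single (p := 2) (by norm_num) (E := fun _ : FreeMonoid (Fin n) => ℂ) 1 (1 : ℂ)
      simpa [he] using this
    have h1 : ‖T (e 1)‖ = C := by
      rw [← Real.sqrt_sq (norm_nonneg (T (e 1))), hnorm, Real.sqrt_sq hC0]
    calc C = ‖T (e 1)‖ := h1.symm
      _ ≤ ‖T‖ * ‖e 1‖ := T.le_opNorm _
      _ = ‖T‖ := by rw [hEnorm, mul_one]
  -- upper bound
  have hup : ‖T‖ ≤ C := by
    refine T.opNorm_le_bound hC0 fun f => ?_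
    set v : {α // α ∈ x.support} × FreeMonoid (Fin n) →
        lp (fun _ : FreeMonoid (Fin n) => ℂ) 2 := fun q => e (q.1.1 * q.2) with hv
    have hinj : Function.Injective
        (fun q : {α // α ∈ x.support} × FreeMonoid (Fin n) => q.1.1 * q.2) := by
      rintro ⟨⟨a, ha⟩, β⟩ ⟨⟨a', ha'⟩, β'⟩ hq
      have hlen : FreeMonoid.length a = FreeMonoid.length a' := by
        rw [hx a ha, hx a' ha']
      obtain ⟨h1, h2⟩ := aux_cancel hlen hq
      simp only [Prod.mk.injEq, Subtype.mk.injEq]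
      exact ⟨h1, h2⟩
    have honv : Orthonormal ℂ v := hon.comp _ hinj
    have hfin : ∀ s : Finset (FreeMonoid (Fin n)),
        ‖T (∑ β ∈ s, lp.single 2 β (f β))‖ ≤ C * ‖f‖ := by
      intro s
      have hsingle : ∀ β : FreeMonoid (Fin n), lp.single 2 β (f β) = f β • e β := by
        intro β
        rw [he]
        dsimp only
        rw [← lp.single_smul, smul_eq_mul, mul_one]
      have hexp : T (∑ β ∈ s, lp.single 2 β (f β)) =
          ∑ q ∈ x.support.attach ×ˢ s,
            (x q.1.1 * f q.2 * (Real.sqrt (b q.2 / b (q.1.1 * q.2)) : ℂ)) • v q := by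
        rw [map_sum, Finset.sum_product, Finset.sum_comm]
        refine Finset.sum_congr rfl fun β _ => ?_
        rw [hsingle, map_smul, hTeβ β, Finset.smul_sum]
        refine Finset.sum_congr rfl fun a _ => ?_
        rw [hv]
        dsimp only
        rw [smul_smul]
        congr 1
        ring
      have hBessel : ∑ β ∈ s, ‖f β‖ ^ 2 ≤ ‖f‖ ^ 2 := by
        have hb := hon.sum_inner_products_le (s := s) f
        have heq : ∀ β ∈ s, ‖f β‖ ^ 2 = ‖(inner ℂ (e β) f : ℂ)‖ ^ 2 := by
          intro β _
          rw [he]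
          dsimp only
          rw [lp.inner_single_left, RCLike.inner_apply, map_one, mul_one]
        rw [Finset.sum_congr rfl heq]
        exact hb
      have hsq : ‖T (∑ β ∈ s, lp.single 2 β (f β))‖ ^ 2 ≤ (C * ‖f‖) ^ 2 := by
        rw [hexp, aux_norm_sq honv]
        have hbound : ∀ q ∈ x.support.attach ×ˢ s,
            ‖x q.1.1 * f q.2 * (Real.sqrt (b q.2 / b (q.1.1 * q.2)) : ℂ)‖ ^ 2 ≤
              (‖x q.1.1‖ ^ 2 / b q.1.1) * ‖f q.2‖ ^ 2 := by
          rintro ⟨⟨a, ha⟩, β⟩ _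
          dsimp only
          rw [norm_mul, norm_mul, mul_pow, mul_pow,
            hnormsqrt _ (div_nonneg (hbpos β).le (hbpos _).le)]
          have hle : b β / b (a * β) ≤ 1 / b a := by
            rw [div_le_div_iff₀ (hbpos _) (hbpos _), one_mul, mul_comm]
            exact hbmul a β
          calc ‖x a‖ ^ 2 * ‖f β‖ ^ 2 * (b β / b (a * β))
              ≤ ‖x a‖ ^ 2 * ‖f β‖ ^ 2 * (1 / b a) :=
                mul_le_mul_of_nonneg_left hle (by positivity)
            _ = ‖x a‖ ^ 2 / b a * ‖f β‖ ^ 2 := by ring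
        have hsplit : ∑ q ∈ x.support.attach ×ˢ s, (‖x q.1.1‖ ^ 2 / b q.1.1) * ‖f q.2‖ ^ 2
            = (∑ α ∈ x.support, ‖x α‖ ^ 2 / b α) * (∑ β ∈ s, ‖f β‖ ^ 2) := by
          rw [← Finset.sum_attach x.support (fun α => ‖x α‖ ^ 2 / b α),
            Finset.sum_mul_sum, ← Finset.sum_product']
        calc ∑ q ∈ x.support.attach ×ˢ s,
              ‖x q.1.1 * f q.2 * (Real.sqrt (b q.2 / b (q.1.1 * q.2)) : ℂ)‖ ^ 2
            ≤ ∑ q ∈ x.support.attach ×ˢ s, (‖x q.1.1‖ ^ 2 / b q.1.1) * ‖f q.2‖ ^ 2 :=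
              Finset.sum_le_sum hbound
          _ = (∑ α ∈ x.support, ‖x α‖ ^ 2 / b α) * (∑ β ∈ s, ‖f β‖ ^ 2) := hsplit
          _ ≤ (∑ α ∈ x.support, ‖x α‖ ^ 2 / b α) * ‖f‖ ^ 2 :=
              mul_le_mul_of_nonneg_left hBessel hCsum
          _ = (C * ‖f‖) ^ 2 := by rw [mul_pow, hCsq]
      have h1 : (0:ℝ) ≤ C * ‖f‖ := mul_nonneg hC0 (norm_nonneg f)
      nlinarith [norm_nonneg (T (∑ β ∈ s, lp.single 2 β (f β)))]
    have hsum : HasSum (fun β : FreeMonoid (Fin n) => lp.single 2 β (f β)) f :=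
      lp.hasSum_single (by norm_num) f
    have htend : Filter.Tendsto
        (fun s : Finset (FreeMonoid (Fin n)) => ‖T (∑ β ∈ s, lp.single 2 β (f β))‖)
        Filter.atTop (nhds ‖T f‖) :=
      ((T.continuous.tendsto f).comp hsum).norm
    exact le_of_tendsto htend (Filter.Eventually.of_forall hfin)
  exact le_antisymm hup hlow
end

section
/- Consider the domain D_f(ℂ) = { (λ₁, λ₂) ∈ ℂ² : |λ₁|² + |λ₂|² + |λ₁λ₂|² < 1 }. Then D_f(ℂ) is not linearly equivalent to the bidisc { |z| < 1, |w| < 1 }, nor to the unit ball { |z|² + |w|² < 1 }: there is no invertible linear map L : ℂ² → ℂ² with L(D_f(ℂ)) equal to either of these domains. -/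
open Complex

lemma lem1 (a c : ℂ) : ‖1*a+c‖^2 + ‖I*a+c‖^2
    + ‖(-1)*a+c‖^2 + ‖(-I)*a+c‖^2
    = 4*(‖a‖^2 + ‖c‖^2) := by
  simp only [Complex.sq_norm, Complex.normSq_apply, Complex.add_re, Complex.add_im,
    Complex.mul_re, Complex.mul_im, Complex.neg_re, Complex.neg_im, Complex.I_re,
    Complex.I_im, Complex.one_re, Complex.one_im]
  ring

lemma lem2 (a b c d : ℂ) :
    ‖(1*a+c)*(1*b+d)‖^2 + ‖(I*a+c)*(I*b+d)‖^2
    + ‖((-1)*a+c)*((-1)*b+d)‖^2 + ‖((-I)*a+c)*((-I)*b+d)‖^2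
    = 4*(‖a*b‖^2 + ‖a*d+b*c‖^2 + ‖c*d‖^2) := by
  simp only [Complex.sq_norm, Complex.normSq_apply, Complex.add_re, Complex.add_im,
    Complex.mul_re, Complex.mul_im, Complex.neg_re, Complex.neg_im, Complex.I_re,
    Complex.I_im, Complex.one_re, Complex.one_im]
  ring

lemma lem3 (A C : ℂ) : ‖A+C‖^2 + ‖A-C‖^2
    = 2*‖A‖^2 + 2*‖C‖^2 := by
  simp only [Complex.sq_norm, Complex.normSq_apply, Complex.add_re, Complex.add_im,
    Complex.sub_re, Complex.sub_im]
  ring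

lemma absm (z : ℂ) : ‖(9/10 : ℂ) * z‖ ^ 2 = (81/100) * ‖z‖ ^ 2 := by
  rw [norm_mul, mul_pow]
  norm_num [Complex.sq_norm, Complex.normSq_apply]

lemma absm2 (z w : ℂ) : ‖(9/10 : ℂ)*z * ((9/10 : ℂ)*w)‖ ^ 2
    = (6561/10000) * ‖z*w‖ ^ 2 := by
  rw [show (9/10:ℂ)*z * ((9/10:ℂ)*w) = (9/10:ℂ)*((9/10:ℂ)*(z*w)) by ring, absm, absm]
  ring

lemma vec_decomp (x y : ℂ) : (![x,y] : Fin 2 → ℂ) = x • ![1,0] + y • ![0,1] := by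
  funext i; fin_cases i <;> simp

lemma absr (t : ℝ) (ht : 0 ≤ t) (z : ℂ) :
    ‖(t : ℂ) * z‖ ^ 2 = t^2 * ‖z‖ ^ 2 := by
  rw [norm_mul, mul_pow, Complex.norm_real, Real.norm_eq_abs, _root_.abs_of_nonneg ht]

lemma h910 : ‖(9/10 : ℂ)‖ < 1 := by
  rw [show (9/10 : ℂ) = ((9/10 : ℝ) : ℂ) by push_cast; ring, Complex.norm_real, Real.norm_eq_abs,
    _root_.abs_of_nonneg (by norm_num : (0:ℝ) ≤ 9/10)]
  norm_num

/-- the domain `D_f(ℂ) = {(λ₁, λ₂) : |λ₁|² + |λ₂|² + |λ₁λ₂|² < 1}` is not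
linearly equivalent to the bidisc nor to the unit ball of `ℂ²`: no invertible `ℂ`-linear
map of `ℂ²` carries it onto either of those domains. -/
theorem stmt15
    (D : Set (Fin 2 → ℂ))
    (hD : D = {lam | ‖lam 0‖ ^ 2 + ‖lam 1‖ ^ 2 +
      ‖lam 0 * lam 1‖ ^ 2 < 1})
    (bidisc : Set (Fin 2 → ℂ))
    (hbidisc : bidisc = {z | ‖z 0‖ < 1 ∧ ‖z 1‖ < 1})
    (ball : Set (Fin 2 → ℂ))
    (hball : ball = {z | ‖z 0‖ ^ 2 + ‖z 1‖ ^ 2 < 1}) :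
    ∀ L : (Fin 2 → ℂ) ≃ₗ[ℂ] (Fin 2 → ℂ),
      (L : (Fin 2 → ℂ) → (Fin 2 → ℂ)) '' D ≠ bidisc ∧
      (L : (Fin 2 → ℂ) → (Fin 2 → ℂ)) '' D ≠ ball := by
  intro L
  constructor
  · -- bidisc case
    intro hL
    have hmem : ∀ x : Fin 2 → ℂ, x ∈ D ↔ (L : (Fin 2 → ℂ) → (Fin 2 → ℂ)) x ∈ bidisc := by
      intro x
      rw [← hL]
      exact (L.injective.mem_set_image).symm
    set u : Fin 2 → ℂ := L.symm ![1,0] with hu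
    set v : Fin 2 → ℂ := L.symm ![0,1] with hv
    set a := u 0 with ha; set b := u 1 with hb; set c := v 0 with hc; set d := v 1 with hd
    have hLu : (L : (Fin 2 → ℂ) → (Fin 2 → ℂ)) u = ![1,0] := L.apply_symm_apply _
    have hLv : (L : (Fin 2 → ℂ) → (Fin 2 → ℂ)) v = ![0,1] := L.apply_symm_apply _
    have hund : u ∉ D := by
      rw [hmem, hLu, hbidisc]; simp
    have hvnd : v ∉ D := by
      rw [hmem, hLv, hbidisc]; simp
    have hu1 : 1 ≤ ‖a‖ ^2 + ‖b‖ ^2 + ‖a*b‖ ^2 := by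
      rw [hD] at hund
      simp only [Set.mem_setOf_eq, not_lt] at hund
      exact hund
    have hv1 : 1 ≤ ‖c‖ ^2 + ‖d‖ ^2 + ‖c*d‖ ^2 := by
      rw [hD] at hvnd
      simp only [Set.mem_setOf_eq, not_lt] at hvnd
      exact hvnd
    have key : ∀ ζ : ℂ, ‖ζ‖ = 1 →
        ‖(9/10 : ℂ)*(ζ*a+c)‖ ^2 + ‖(9/10 : ℂ)*(ζ*b+d)‖ ^2
          + ‖((9/10 : ℂ)*(ζ*a+c)) * ((9/10 : ℂ)*(ζ*b+d))‖ ^2 < 1 := by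
      intro ζ hζ
      have hmemx : L.symm ![(9/10)*ζ, (9/10)] ∈ D := by
        rw [hmem, L.apply_symm_apply, hbidisc]
        refine ⟨?_, ?_⟩
        · show ‖(9/10 : ℂ)*ζ‖ < 1
          rw [norm_mul, hζ, mul_one]; exact h910
        · show ‖(9/10 : ℂ)‖ < 1
          exact h910
      have hdec : L.symm ![(9/10)*ζ, (9/10)] = ((9/10)*ζ) • u + (9/10 : ℂ) • v := by
        rw [hu, hv, ← map_smul, ← map_smul, ← map_add, vec_decomp]
      rw [hdec, hD] at hmemx
      simp only [Set.mem_setOf_eq] at hmemx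
      have e0 : (((9/10)*ζ) • u + (9/10 : ℂ) • v) 0 = (9/10 : ℂ)*(ζ*a+c) := by
        simp only [Pi.add_apply, Pi.smul_apply, smul_eq_mul, ← ha, ← hc]; ring
      have e1 : (((9/10)*ζ) • u + (9/10 : ℂ) • v) 1 = (9/10 : ℂ)*(ζ*b+d) := by
        simp only [Pi.add_apply, Pi.smul_apply, smul_eq_mul, ← hb, ← hd]; ring
      rw [e0, e1] at hmemx
      exact hmemx
    have k1 := key 1 (by simp)
    have k2 := key I (by simp)
    have k3 := key (-1) (by simp)
    have k4 := key (-I) (by simp)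
    simp only [absm, absm2] at k1 k2 k3 k4
    have sum4 : (81/100 : ℝ) * (4*(‖a‖^2 + ‖c‖^2))
        + (81/100 : ℝ) * (4*(‖b‖^2 + ‖d‖^2))
        + (6561/10000 : ℝ) * (4*(‖a*b‖^2 + ‖a*d+b*c‖^2 + ‖c*d‖^2)) < 4 := by
      rw [← lem1 a c, ← lem1 b d, ← lem2 a b c d]
      linarith [k1, k2, k3, k4]
    linarith [sum4, hu1, hv1, sq_nonneg (‖a‖), sq_nonneg (‖b‖),
      sq_nonneg (‖c‖), sq_nonneg (‖d‖),
      sq_nonneg (‖a*d+b*c‖)]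
  · -- ball case
    intro hL
    have hmem : ∀ x : Fin 2 → ℂ, x ∈ D ↔ (L : (Fin 2 → ℂ) → (Fin 2 → ℂ)) x ∈ ball := by
      intro x
      rw [← hL]
      exact (L.injective.mem_set_image).symm
    set A := ((L : (Fin 2 → ℂ) → (Fin 2 → ℂ)) ![1,0]) 0 with hA
    set B := ((L : (Fin 2 → ℂ) → (Fin 2 → ℂ)) ![1,0]) 1 with hB
    set C := ((L : (Fin 2 → ℂ) → (Fin 2 → ℂ)) ![0,1]) 0 with hC
    set E := ((L : (Fin 2 → ℂ) → (Fin 2 → ℂ)) ![0,1]) 1 with hE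
    have hLxy : ∀ x y : ℂ, (L : (Fin 2 → ℂ) → (Fin 2 → ℂ)) ![x,y] 0 = x*A + y*C
        ∧ (L : (Fin 2 → ℂ) → (Fin 2 → ℂ)) ![x,y] 1 = x*B + y*E := by
      intro x y
      rw [vec_decomp, map_add, map_smul, map_smul]
      constructor <;>
        simp only [Pi.add_apply, Pi.smul_apply, smul_eq_mul, ← hA, ← hB, ← hC, ← hE]
    set t : ℝ := Real.sqrt (9/20) with htdef
    set r : ℝ := Real.sqrt (19/20) with hrdef
    have ht0 : 0 ≤ t := Real.sqrt_nonneg _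
    have hr0 : 0 ≤ r := Real.sqrt_nonneg _
    have ht2 : t^2 = 9/20 := Real.sq_sqrt (by norm_num)
    have hr2 : r^2 = 19/20 := Real.sq_sqrt (by norm_num)
    have hgr : ∀ x y : ℂ, (![x,y] : Fin 2 → ℂ) ∈ D ↔
        ‖x‖^2 + ‖y‖^2 + ‖x*y‖^2 < 1 := by
      intro x y
      rw [hD]
      simp only [Set.mem_setOf_eq, Matrix.cons_val_zero, Matrix.cons_val_one, Matrix.head_cons]
    have hq : ∀ x y : ℂ, (![x,y] : Fin 2 → ℂ) ∈ D ↔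
        ‖x*A + y*C‖^2 + ‖x*B + y*E‖^2 < 1 := by
      intro x y
      rw [hmem, hball]
      simp only [Set.mem_setOf_eq, (hLxy x y).1, (hLxy x y).2]
    have hin1 : (![(r:ℂ),0] : Fin 2 → ℂ) ∈ D := by
      rw [hgr]
      simp only [mul_zero, norm_zero]
      rw [Complex.norm_real, Real.norm_eq_abs, _root_.abs_of_nonneg hr0]
      nlinarith [hr2]
    have hin2 : (![0,(r:ℂ)] : Fin 2 → ℂ) ∈ D := by
      rw [hgr]
      simp only [zero_mul, norm_zero]
      rw [Complex.norm_real, Real.norm_eq_abs, _root_.abs_of_nonneg hr0]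
      nlinarith [hr2]
    have hout1 : (![(t:ℂ),(t:ℂ)] : Fin 2 → ℂ) ∉ D := by
      rw [hgr]
      push_neg
      rw [show ((t:ℂ)*(t:ℂ)) = ((t*t : ℝ) : ℂ) by push_cast; ring,
        Complex.norm_real, Real.norm_eq_abs, Complex.norm_real, Real.norm_eq_abs, _root_.abs_of_nonneg ht0,
        _root_.abs_of_nonneg (by positivity : (0:ℝ) ≤ t*t)]
      nlinarith [ht2]
    have hout2 : (![(t:ℂ),-(t:ℂ)] : Fin 2 → ℂ) ∉ D := by
      rw [hgr]
      push_neg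
      rw [show ((t:ℂ)*(-(t:ℂ))) = ((-(t*t) : ℝ) : ℂ) by push_cast; ring,
        norm_neg, Complex.norm_real, Real.norm_eq_abs, Complex.norm_real, Real.norm_eq_abs,
        _root_.abs_of_nonneg ht0,
        _root_.abs_of_nonpos (by nlinarith : (-(t*t):ℝ) ≤ 0)]
      nlinarith [ht2]
    have q1 : ‖(r:ℂ)*A + 0*C‖^2 + ‖(r:ℂ)*B + 0*E‖^2 < 1 :=
      (hq _ _).mp hin1
    have q2 : ‖0*A + (r:ℂ)*C‖^2 + ‖0*B + (r:ℂ)*E‖^2 < 1 :=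
      (hq _ _).mp hin2
    have q3' : ¬ (‖(t:ℂ)*A + (t:ℂ)*C‖^2 + ‖(t:ℂ)*B + (t:ℂ)*E‖^2 < 1) :=
      fun h => hout1 ((hq _ _).mpr h)
    have q4' : ¬ (‖(t:ℂ)*A + (-(t:ℂ))*C‖^2 + ‖(t:ℂ)*B + (-(t:ℂ))*E‖^2 < 1) :=
      fun h => hout2 ((hq _ _).mpr h)
    have q3 := not_lt.mp q3'
    have q4 := not_lt.mp q4'
    have eA : ‖(r:ℂ)*A + 0*C‖^2 = r^2 * ‖A‖^2 := by
      rw [zero_mul, add_zero, absr r hr0]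
    have eB : ‖(r:ℂ)*B + 0*E‖^2 = r^2 * ‖B‖^2 := by
      rw [zero_mul, add_zero, absr r hr0]
    have eC : ‖0*A + (r:ℂ)*C‖^2 = r^2 * ‖C‖^2 := by
      rw [zero_mul, zero_add, absr r hr0]
    have eE : ‖0*B + (r:ℂ)*E‖^2 = r^2 * ‖E‖^2 := by
      rw [zero_mul, zero_add, absr r hr0]
    rw [eA, eB] at q1
    rw [eC, eE] at q2
    have ePP : ‖(t:ℂ)*A + (t:ℂ)*C‖^2 = t^2 * ‖A+C‖^2 := by
      rw [show (t:ℂ)*A + (t:ℂ)*C = (t:ℂ)*(A+C) by ring, absr t ht0]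
    have ePM : ‖(t:ℂ)*A + (-(t:ℂ))*C‖^2 = t^2 * ‖A-C‖^2 := by
      rw [show (t:ℂ)*A + (-(t:ℂ))*C = (t:ℂ)*(A-C) by ring, absr t ht0]
    have eQP : ‖(t:ℂ)*B + (t:ℂ)*E‖^2 = t^2 * ‖B+E‖^2 := by
      rw [show (t:ℂ)*B + (t:ℂ)*E = (t:ℂ)*(B+E) by ring, absr t ht0]
    have eQM : ‖(t:ℂ)*B + (-(t:ℂ))*E‖^2 = t^2 * ‖B-E‖^2 := by
      rw [show (t:ℂ)*B + (-(t:ℂ))*E = (t:ℂ)*(B-E) by ring, absr t ht0]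
    rw [ePP, eQP] at q3
    rw [ePM, eQM] at q4
    have par1 := lem3 A C
    have par2 := lem3 B E
    rw [ht2] at q3 q4
    rw [hr2] at q1 q2
    linarith [q1, q2, q3, q4, par1, par2]
end
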